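/- arXiv:2402.10782 — 2 statements merged into one kernel-verified Lean document; each statement's English description precedes it below -/
import Mathlib

section
/- A tournament T is k-dicolourable (has dichromatic number at most k) if and only if T has a feedback arc set F whose underlying undirected graph is k-colourable. -/
/-- A tournament: irreflexive, and exactly one arc between distinct vertices. -/
def IsTournament {V : Type*} (r : V → V → Prop) : Prop :=
  (∀ v, ¬ r v v) ∧ ∀ u v, u ≠ v → ((r u v ∨ r v u) ∧ ¬ (r u v ∧ r v u))

/-- The backedge graph of a tournament `r` with respect to an ordering `lt`:
an edge `{u,v}` whenever the arc between `u` and `v` is a back-arc. -/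
def backedgeGraph {V : Type*} (r lt : V → V → Prop) : SimpleGraph V where
  Adj u v := u ≠ v ∧ ((r u v ∧ lt v u) ∨ (r v u ∧ lt u v))
  symm := ⟨fun u v h => ⟨Ne.symm h.1, h.2.symm⟩⟩
  loopless := ⟨fun v h => h.1 rfl⟩

/-- A digraph is acyclic if it has no directed cycle. -/
def DAcyclic {V : Type*} (r : V → V → Prop) : Prop :=
  ∀ x, ¬ Relation.TransGen r x x

/-- `r` admits a dicolouring with `k` colours: each colour class induces an
acyclic subtournament. -/
def IsDicolourable {V : Type*} (r : V → V → Prop) (k : ℕ) : Prop :=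
  ∃ c : V → Fin k, DAcyclic (fun u v => r u v ∧ c u = c v)

/-- The underlying undirected graph of a set of arcs `F`. -/
def arcGraph {V : Type*} (F : V → V → Prop) : SimpleGraph V where
  Adj u v := u ≠ v ∧ (F u v ∨ F v u)
  symm := ⟨fun u v h => ⟨Ne.symm h.1, h.2.symm⟩⟩
  loopless := ⟨fun v h => h.1 rfl⟩

theorem stmt_5 {V : Type*} [Fintype V] (r : V → V → Prop) (hT : IsTournament r) (k : ℕ) :
    IsDicolourable r k ↔
      ∃ F : V → V → Prop, (∀ u v, F u v → r u v) ∧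
        DAcyclic (fun u v => r u v ∧ ¬ F u v) ∧ (arcGraph F).Colorable k := by
  constructor
  · rintro ⟨c, hc⟩
    -- strict order: by colour, then by transgen within class
    set s : V → V → Prop := fun u v =>
      c u < c v ∨ (c u = c v ∧ Relation.TransGen (fun a b => r a b ∧ c a = c b) u v) with hs
    have sirr : ∀ u, ¬ s u u := by
      intro u h
      rcases h with h | ⟨_, h⟩
      · exact lt_irrefl _ h
      · exact hc u h
    have strans : ∀ u v w, s u v → s v w → s u w := by
      rintro u v w (h1 | ⟨e1, h1⟩) (h2 | ⟨e2, h2⟩)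
      · exact Or.inl (lt_trans h1 h2)
      · exact Or.inl (e2 ▸ h1)
      · exact Or.inl (e1 ▸ h2)
      · exact Or.inr ⟨e1.trans e2, h1.trans h2⟩
    set p : V → V → Prop := fun u v => s u v ∨ u = v with hp
    haveI : IsPartialOrder V p :=
      { refl := fun a => Or.inr rfl
        trans := by
          rintro a b cc (h1 | rfl) (h2 | rfl)
          · exact Or.inl (strans _ _ _ h1 h2)
          · exact Or.inl h1
          · exact Or.inl h2
          · exact Or.inr rfl
        antisymm := by
          rintro a b (h1 | rfl) (h2 | h2)
          · exact absurd (strans _ _ _ h1 h2) (sirr a)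
          · exact h2.symm
          · rfl
          · rfl }
    obtain ⟨le, hlin, hle⟩ := extend_partialOrder p
    set lt : V → V → Prop := fun u v => le u v ∧ u ≠ v with hlt
    refine ⟨fun u v => r u v ∧ lt v u, fun u v h => h.1, ?_, ?_⟩
    · -- forward arcs acyclic
      have hsub : ∀ u v, (r u v ∧ ¬ (r u v ∧ lt v u)) → lt u v := by
        intro u v ⟨hr, hn⟩
        have hne : u ≠ v := fun e => (hT.1 u) (e ▸ hr)
        have : ¬ lt v u := fun h => hn ⟨hr, h⟩
        rcases hlin.total v u with h | h
        · exact absurd ⟨h, hne.symm⟩ this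
        · exact ⟨h, hne⟩
      intro x hx
      have lttrans : Transitive lt := by
        intro a b cc h1 h2
        refine ⟨hlin.trans _ _ _ h1.1 h2.1, fun e => ?_⟩
        exact h1.2 (hlin.antisymm _ _ h1.1 (e ▸ h2.1))
      have : lt x x := by
        have h := Relation.TransGen.mono hsub _ _ hx
        rwa [@Relation.transGen_eq_self _ _ ⟨lttrans⟩] at h
      exact this.2 rfl
    · -- colouring
      refine ⟨SimpleGraph.Coloring.mk c ?_⟩
      rintro u v (⟨hne, hF⟩ : u ≠ v ∧ _) hcc
      -- wlog F u v
      have key : ∀ a b, c a = c b → r a b → lt b a → False := by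
        intro a b he hr hltba
        have hsab : s a b := Or.inr ⟨he, Relation.TransGen.single ⟨hr, he⟩⟩
        have hab : le a b := hle _ _ (Or.inl hsab)
        have he2 : a = b := hlin.antisymm _ _ hab hltba.1
        exact hT.1 b (he2 ▸ hr)
      rcases hF with ⟨hr, hltvu⟩ | ⟨hr, hltuv⟩
      · exact key u v hcc hr hltvu
      · exact key v u hcc.symm hr hltuv
  · rintro ⟨F, hFr, hacyc, ⟨col⟩⟩
    refine ⟨col, fun x hx => hacyc x (Relation.TransGen.mono ?_ _ _ hx)⟩
    rintro u v ⟨hr, hcc⟩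
    refine ⟨hr, fun hF => ?_⟩
    have hne : u ≠ v := fun e => (hT.1 u) (e ▸ hr)
    exact col.valid (G := arcGraph F) ⟨hne, Or.inl hF⟩ hcc
end

section
/- Let T be a tournament, ≺ a linear order on V(T) such that T^≺ is a forest, and let M ⊆ V(T) be a set such that T^≺ restricted to M is a spanning tree of M. If a, b are vertices outside M with a → m → b in T for every m ∈ M, then a ≺ b. -/
lemma aux_two_nbrs {V : Type*} (G : SimpleGraph V) (hG : G.IsAcyclic) (M : Set V)
    (hconn : (G.induce M).Connected) (c : V) (hc : c ∉ M)
    (m1 m2 : V) (h1 : m1 ∈ M) (h2 : m2 ∈ M) (hne : m1 ≠ m2)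
    (a1 : G.Adj c m1) (a2 : G.Adj c m2) : False := by
  classical
  let f : (G.induce M) →g G := ⟨Subtype.val, fun h => h⟩
  have hfinj : Function.Injective f := fun x y h => Subtype.ext h
  obtain ⟨w⟩ := hconn ⟨m1, h1⟩ ⟨m2, h2⟩
  let p : G.Path m1 m2 := (w.toPath).map f hfinj
  have hq : (SimpleGraph.Walk.cons a1.symm (SimpleGraph.Walk.cons a2 SimpleGraph.Walk.nil)).IsPath := by
    simp [SimpleGraph.Walk.isPath_def, hne, a1.ne', a2.ne]
  let q : G.Path m1 m2 := ⟨_, hq⟩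
  have hpq : p = q := hG.path_unique p q
  have hcq : c ∈ (q : G.Walk m1 m2).support := by
    simp [q]
  have hcp : c ∉ (p : G.Walk m1 m2).support := by
    intro hmem
    rw [SimpleGraph.Path.map_coe, SimpleGraph.Walk.support_map, List.mem_map] at hmem
    obtain ⟨x, _, hx⟩ := hmem
    exact hc (hx ▸ x.2)
  rw [hpq] at hcp
  exact hcp hcq

theorem stmt_11 {V : Type*} (r lt : V → V → Prop)
    (hT : IsTournament r) (hlt : IsStrictTotalOrder V lt)
    (hforest : (backedgeGraph r lt).IsAcyclic)
    (M : Set V) (hM : 3 ≤ M.ncard)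
    (htree : ((backedgeGraph r lt).induce M).IsTree)
    (a b : V) (haM : a ∉ M) (hbM : b ∉ M) (hab : a ≠ b)
    (harc : ∀ m ∈ M, r a m ∧ r m b) :
    lt a b := by
  classical
  haveI := hlt
  have hfin : M.Finite := by
    by_contra h
    rw [Set.Infinite.ncard h] at hM
    omega
  have hba : ¬ lt b a := by
    intro hba
    have key : ∀ m ∈ M, (backedgeGraph r lt).Adj a m ∨ (backedgeGraph r lt).Adj b m := by
      intro m hm
      have hne_a : a ≠ m := fun h => haM (h ▸ hm)
      have hne_b : b ≠ m := fun h => hbM (h ▸ hm)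
      rcases trichotomous_of lt m a with hma | hma | hma
      · exact Or.inl ⟨hne_a, Or.inl ⟨(harc m hm).1, hma⟩⟩
      · exact absurd hma.symm hne_a
      · have hbm : lt b m := trans_of lt hba hma
        exact Or.inr ⟨hne_b, Or.inr ⟨(harc m hm).2, hbm⟩⟩
    obtain ⟨m1, hm1, m2, hm2, m3, hm3, h12, h13, h23⟩ :=
      (Set.two_lt_ncard hfin).mp (by omega)
    have conn := htree.isConnected
    rcases key m1 hm1 with k1 | k1 <;> rcases key m2 hm2 with k2 | k2 <;>
      rcases key m3 hm3 with k3 | k3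
    · exact aux_two_nbrs _ hforest M conn a haM m1 m2 hm1 hm2 h12 k1 k2
    · exact aux_two_nbrs _ hforest M conn a haM m1 m2 hm1 hm2 h12 k1 k2
    · exact aux_two_nbrs _ hforest M conn a haM m1 m3 hm1 hm3 h13 k1 k3
    · exact aux_two_nbrs _ hforest M conn b hbM m2 m3 hm2 hm3 h23 k2 k3
    · exact aux_two_nbrs _ hforest M conn a haM m2 m3 hm2 hm3 h23 k2 k3
    · exact aux_two_nbrs _ hforest M conn b hbM m1 m3 hm1 hm3 h13 k1 k3
    · exact aux_two_nbrs _ hforest M conn b hbM m1 m2 hm1 hm2 h12 k1 k2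
    · exact aux_two_nbrs _ hforest M conn b hbM m1 m2 hm1 hm2 h12 k1 k2
  rcases trichotomous_of lt a b with h | h | h
  · exact h
  · exact absurd h hab
  · exact absurd h hba
end
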